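/- Let 𝒳 be a finite set with |𝒳| ≥ 2 and P a probability mass function on 𝒳 with P(x) > 0 for all x. Let Λ = {ℓ : 𝒳 → ℝ≥0 : Σ_x 2^{−ℓ(x)} ≤ 1}, and for z ≥ 0 and a probability mass function Q on 𝒳 set g_{z,Q,P}(x) = (1 − z²/2)·P(x) + z·√(Q(x)·P(x)). Then the infimum over ℓ ∈ Λ of E[ℓ(X)] + E[ℓ(X)²]/(2E[ℓ(X)]) (with X ∼ P) equals the supremum, over pairs (z, Q) with z ≥ 0, Q a pmf on 𝒳, and g_{z,Q,P}(x) ≥ 0 for all x ∈ 𝒳, of Σ_{x∈𝒳} g_{z,Q,P}(x) · log₂( (Σ_{x'∈𝒳} g_{z,Q,P}(x')) / g_{z,Q,P}(x) ), where terms with g_{z,Q,P}(x) = 0 are taken to be 0. -/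

import Mathlib

open Real Finset

namespace Stmt7Aux

variable {𝒳 : Type*} [Fintype 𝒳]


lemma two_rpow_pos (t : ℝ) : (0:ℝ) < (2:ℝ) ^ t := Real.rpow_pos_of_pos two_pos t

lemma ell_pos (hcard : 2 ≤ Fintype.card 𝒳) {ℓ : 𝒳 → ℝ} (h0 : ∀ x, 0 ≤ ℓ x)
    (hk : ∑ x, (2 : ℝ) ^ (-ℓ x) ≤ 1) (x : 𝒳) : 0 < ℓ x := by
  classical
  obtain ⟨y, hyx⟩ := Fintype.exists_ne_of_one_lt_card (by omega) x
  have hsub : (2:ℝ) ^ (-ℓ x) + (2:ℝ) ^ (-ℓ y) ≤ ∑ z, (2:ℝ) ^ (-ℓ z) := by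
    have h1 : ({x, y} : Finset 𝒳) ⊆ Finset.univ := Finset.subset_univ _
    have h2 := Finset.sum_le_sum_of_subset_of_nonneg h1
      (fun z _ _ => (two_rpow_pos (-ℓ z)).le)
    rwa [Finset.sum_pair (Ne.symm hyx)] at h2
  rcases (h0 x).lt_or_eq with h | h
  · exact h
  · exfalso
    rw [← h] at hsub
    simp only [neg_zero, Real.rpow_zero] at hsub
    have := two_rpow_pos (-ℓ y)
    linarith



/-- Gibbs' inequality with sub-normalized reference measure `2^{-ℓ}`. -/
lemma gibbs (g ℓ : 𝒳 → ℝ) (hg : ∀ x, 0 ≤ g x) (hk : ∑ x, (2 : ℝ) ^ (-ℓ x) ≤ 1) :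
    ∑ x, g x * Real.logb 2 ((∑ x', g x') / g x) ≤ ∑ x, g x * ℓ x := by
  classical
  set G := ∑ x', g x' with hG
  have hG0 : 0 ≤ G := Finset.sum_nonneg fun x _ => hg x
  rcases hG0.lt_or_eq with hGpos | hGzero
  · -- pointwise bound
    have key : ∀ x, g x * Real.logb 2 (G / g x) ≤
        g x * ℓ x + (G * (2:ℝ) ^ (-ℓ x) - g x) / Real.log 2 := by
      intro x
      rcases (hg x).lt_or_eq with hgx | hgx
      · have hq : (0:ℝ) < (2:ℝ) ^ (-ℓ x) := two_rpow_pos _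
        set t : ℝ := G * (2:ℝ) ^ (-ℓ x) / g x with ht
        have htpos : 0 < t := div_pos (mul_pos hGpos hq) hgx
        have hsplit : G / g x = t * (2:ℝ) ^ (ℓ x) := by
          rw [ht]
          rw [Real.rpow_neg (by norm_num : (0:ℝ) ≤ 2)]
          field_simp
        have hlogb : Real.logb 2 (G / g x) = Real.logb 2 t + ℓ x := by
          rw [hsplit, Real.logb_mul (ne_of_gt htpos) (ne_of_gt (two_rpow_pos _)),
            Real.logb_rpow (by norm_num) (by norm_num)]
        have hlt : Real.logb 2 t ≤ (t - 1) / Real.log 2 := by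
          rw [Real.logb, div_le_div_iff_of_pos_right (Real.log_pos one_lt_two)]
          · exact Real.log_le_sub_one_of_pos htpos
        calc g x * Real.logb 2 (G / g x) = g x * Real.logb 2 t + g x * ℓ x := by
              rw [hlogb]; ring
          _ ≤ g x * ((t - 1) / Real.log 2) + g x * ℓ x := by
              have := mul_le_mul_of_nonneg_left hlt (hg x); linarith
          _ = g x * ℓ x + (G * (2:ℝ) ^ (-ℓ x) - g x) / Real.log 2 := by
              rw [ht]; field_simp; ring
      · rw [← hgx]
        simp only [zero_mul, zero_add, sub_zero, zero_div]
        positivity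
    calc ∑ x, g x * Real.logb 2 (G / g x)
        ≤ ∑ x, (g x * ℓ x + (G * (2:ℝ) ^ (-ℓ x) - g x) / Real.log 2) :=
          Finset.sum_le_sum fun x _ => key x
      _ = (∑ x, g x * ℓ x) + (G * (∑ x, (2:ℝ) ^ (-ℓ x)) - G) / Real.log 2 := by
          rw [Finset.sum_add_distrib, ← Finset.sum_div, Finset.sum_sub_distrib, ← Finset.mul_sum]
      _ ≤ ∑ x, g x * ℓ x := by
          have hlog2 : 0 < Real.log 2 := Real.log_pos one_lt_two
          have : G * (∑ x, (2:ℝ) ^ (-ℓ x)) - G ≤ 0 := by nlinarith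
          have := div_nonpos_of_nonpos_of_nonneg this hlog2.le
          linarith
  · -- G = 0 : all g x = 0
    have hzero : ∀ x ∈ Finset.univ, g x = 0 := by
      intro x hx
      exact (Finset.sum_eq_zero_iff_of_nonneg (fun y _ => hg y)).mp hGzero.symm x hx
    have h1 : ∑ x, g x * Real.logb 2 (G / g x) = 0 :=
      Finset.sum_eq_zero fun x hx => by rw [hzero x hx]; ring
    have h2 : ∑ x, g x * ℓ x = 0 :=
      Finset.sum_eq_zero fun x hx => by rw [hzero x hx]; ring
    rw [h1, h2]



lemma weak_duality (hcard : 2 ≤ Fintype.card 𝒳) (P : 𝒳 → ℝ) (hP : ∀ x, 0 < P x)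
    (hPsum : ∑ x, P x = 1) {ℓ : 𝒳 → ℝ} (h0 : ∀ x, 0 ≤ ℓ x)
    (hk : ∑ x, (2 : ℝ) ^ (-ℓ x) ≤ 1) (hm : 0 < ∑ x, P x * ℓ x)
    {z : ℝ} {Q : 𝒳 → ℝ} (hz : 0 ≤ z) (hQ0 : ∀ x, 0 ≤ Q x) (hQs : ∑ x, Q x = 1)
    (hgnn : ∀ x, 0 ≤ (1 - z ^ 2 / 2) * P x + z * Real.sqrt (Q x * P x)) :
    ∑ x, ((1 - z ^ 2 / 2) * P x + z * Real.sqrt (Q x * P x)) *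
        Real.logb 2 ((∑ x', ((1 - z ^ 2 / 2) * P x' + z * Real.sqrt (Q x' * P x'))) /
          ((1 - z ^ 2 / 2) * P x + z * Real.sqrt (Q x * P x))) ≤
      (∑ x, P x * ℓ x) + (∑ x, P x * ℓ x ^ 2) / (2 * ∑ x, P x * ℓ x) := by
  classical
  set g : 𝒳 → ℝ := fun x => (1 - z ^ 2 / 2) * P x + z * Real.sqrt (Q x * P x) with hgdef
  set m : ℝ := ∑ x, P x * ℓ x with hmdef
  set s : ℝ := ∑ x, P x * ℓ x ^ 2 with hsdef
  have hs0 : 0 ≤ s := Finset.sum_nonneg fun x _ => mul_nonneg (hP x).le (sq_nonneg _)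
  have step1 : ∑ x, g x * Real.logb 2 ((∑ x', g x') / g x) ≤ ∑ x, g x * ℓ x :=
    gibbs g ℓ hgnn hk
  -- ∑ g ℓ = (1 - z²/2) m + z T
  set T : ℝ := ∑ x, Real.sqrt (Q x * P x) * ℓ x with hTdef
  have hT0 : 0 ≤ T := Finset.sum_nonneg fun x _ => mul_nonneg (Real.sqrt_nonneg _) (h0 x)
  have hsum : ∑ x, g x * ℓ x = (1 - z ^ 2 / 2) * m + z * T := by
    rw [hmdef, hTdef, Finset.mul_sum, Finset.mul_sum, ← Finset.sum_add_distrib]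
    apply Finset.sum_congr rfl
    intro x _; rw [hgdef]; ring
  -- Cauchy-Schwarz : T^2 ≤ s
  have hCS : T ^ 2 ≤ s := by
    have := Finset.sum_sq_le_sum_mul_sum_of_sq_eq_mul Finset.univ
      (r := fun x => Real.sqrt (Q x * P x) * ℓ x) (f := Q) (g := fun x => P x * ℓ x ^ 2)
      (fun x _ => hQ0 x) (fun x _ => mul_nonneg (hP x).le (sq_nonneg _))
      (fun x _ => by
        rw [mul_pow, Real.sq_sqrt (mul_nonneg (hQ0 x) (hP x).le)]; ring)
    rwa [hQs, one_mul] at this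
  have hTs : T ≤ Real.sqrt s := by
    rw [← Real.sqrt_sq hT0]
    exact Real.sqrt_le_sqrt hCS
  -- AM-GM : z * sqrt s ≤ z^2 * m / 2 + s / (2 m)
  have hsq : Real.sqrt s ^ 2 = s := Real.sq_sqrt hs0
  have hAM : z * Real.sqrt s ≤ z ^ 2 * m / 2 + s / (2 * m) := by
    rw [div_add_div _ _ (by norm_num : (2:ℝ) ≠ 0) (by positivity : 2 * m ≠ 0),
      le_div_iff₀ (by positivity : (0:ℝ) < 2 * (2 * m))]
    nlinarith [sq_nonneg (z * m - Real.sqrt s), Real.sqrt_nonneg s]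
  have hzT : z * T ≤ z ^ 2 * m / 2 + s / (2 * m) :=
    le_trans (mul_le_mul_of_nonneg_left hTs hz) hAM
  calc ∑ x, g x * Real.logb 2 ((∑ x', g x') / g x) ≤ ∑ x, g x * ℓ x := step1
    _ = (1 - z ^ 2 / 2) * m + z * T := hsum
    _ ≤ m + s / (2 * m) := by nlinarith



lemma m_pos (hcard : 2 ≤ Fintype.card 𝒳) {P : 𝒳 → ℝ} (hP : ∀ x, 0 < P x) {ℓ : 𝒳 → ℝ}
    (h0 : ∀ x, 0 ≤ ℓ x) (hk : ∑ x, (2 : ℝ) ^ (-ℓ x) ≤ 1) : 0 < ∑ x, P x * ℓ x := by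
  have : Nonempty 𝒳 := Fintype.card_pos_iff.mp (by omega)
  exact Finset.sum_pos (fun x _ => mul_pos (hP x) (ell_pos hcard h0 hk x)) Finset.univ_nonempty

lemma kraft_continuous : Continuous (fun ℓ : 𝒳 → ℝ => ∑ x, (2:ℝ) ^ (-ℓ x)) := by
  apply continuous_finset_sum
  intro x _
  have : (fun ℓ : 𝒳 → ℝ => (2:ℝ) ^ (-ℓ x)) =
      fun ℓ => Real.exp (Real.log 2 * (-ℓ x)) :=
    funext fun ℓ => Real.rpow_def_of_pos two_pos _
  rw [this]
  exact Real.continuous_exp.comp (continuous_const.mul (continuous_apply x).neg)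

lemma baseline_kraft : ∑ _x : 𝒳, (2:ℝ) ^ (-((Fintype.card 𝒳 : ℕ) : ℝ)) ≤ 1 := by
  set N := Fintype.card 𝒳
  have h2N : (0:ℝ) < 2 ^ N := by positivity
  rw [Finset.sum_const, Finset.card_univ, nsmul_eq_mul,
    Real.rpow_neg (by norm_num : (0:ℝ) ≤ 2), Real.rpow_natCast,
    ← div_eq_mul_inv, div_le_one h2N]
  exact_mod_cast (Nat.lt_two_pow_self (n := N)).le

lemma exists_min (hcard : 2 ≤ Fintype.card 𝒳) (P : 𝒳 → ℝ) (hP : ∀ x, 0 < P x)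
    (hPsum : ∑ x, P x = 1) :
    ∃ ℓ : 𝒳 → ℝ, (∀ x, 0 ≤ ℓ x) ∧ (∑ x, (2:ℝ) ^ (-ℓ x) ≤ 1) ∧
      ∀ ℓ' : 𝒳 → ℝ, (∀ x, 0 ≤ ℓ' x) → (∑ x, (2:ℝ) ^ (-ℓ' x) ≤ 1) →
        (∑ x, P x * ℓ x) + (∑ x, P x * ℓ x ^ 2) / (2 * ∑ x, P x * ℓ x) ≤
        (∑ x, P x * ℓ' x) + (∑ x, P x * ℓ' x ^ 2) / (2 * ∑ x, P x * ℓ' x) := by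
  classical
  have hNE : Nonempty 𝒳 := Fintype.card_pos_iff.mp (by omega)
  set cost : (𝒳 → ℝ) → ℝ :=
    fun ℓ => (∑ x, P x * ℓ x) + (∑ x, P x * ℓ x ^ 2) / (2 * ∑ x, P x * ℓ x) with hcost
  set ℓ₀ : 𝒳 → ℝ := fun _ => ((Fintype.card 𝒳 : ℕ) : ℝ) with hℓ₀
  have hℓ₀0 : ∀ x, 0 ≤ ℓ₀ x := fun x => by positivity
  have hℓ₀k : ∑ x, (2:ℝ) ^ (-ℓ₀ x) ≤ 1 := baseline_kraft
  have hc₀0 : 0 ≤ cost ℓ₀ := by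
    have h1 : 0 < ∑ x, P x * ℓ₀ x := m_pos hcard hP hℓ₀0 hℓ₀k
    have h2 : 0 ≤ ∑ x, P x * ℓ₀ x ^ 2 :=
      Finset.sum_nonneg fun x _ => mul_nonneg (hP x).le (sq_nonneg _)
    positivity
  obtain ⟨x₀, -, hx₀⟩ := Finset.exists_min_image Finset.univ P Finset.univ_nonempty
  set pm := P x₀ with hpm
  have hpm0 : 0 < pm := hP x₀
  set R : ℝ := cost ℓ₀ / pm + ((Fintype.card 𝒳 : ℕ) : ℝ) + 1 with hR
  have hRN : ((Fintype.card 𝒳 : ℕ) : ℝ) ≤ R := by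
    have : 0 ≤ cost ℓ₀ / pm := div_nonneg hc₀0 hpm0.le
    rw [hR]; linarith
  have hpmR : cost ℓ₀ < pm * R := by
    have : pm * (cost ℓ₀ / pm) = cost ℓ₀ := by field_simp
    have hN0 : (0:ℝ) ≤ ((Fintype.card 𝒳 : ℕ) : ℝ) := by positivity
    rw [hR]; nlinarith
  set K : Set (𝒳 → ℝ) := Set.Icc 0 (fun _ => R) ∩ {ℓ | ∑ x, (2:ℝ) ^ (-ℓ x) ≤ 1} with hK
  have hKfeas : ∀ ℓ ∈ K, (∀ x, 0 ≤ ℓ x) ∧ (∑ x, (2:ℝ) ^ (-ℓ x) ≤ 1) := by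
    rintro ℓ ⟨⟨h1, -⟩, h2⟩
    exact ⟨fun x => h1 x, h2⟩
  have hKcpt : IsCompact K :=
    isCompact_Icc.inter_right (isClosed_le kraft_continuous continuous_const)
  have hKne : K.Nonempty := by
    refine ⟨ℓ₀, ⟨⟨fun x => hℓ₀0 x, fun x => hRN⟩, hℓ₀k⟩⟩
  have hmc : Continuous (fun ℓ : 𝒳 → ℝ => ∑ x, P x * ℓ x) :=
    continuous_finset_sum _ fun x _ => continuous_const.mul (continuous_apply x)
  have hsc : Continuous (fun ℓ : 𝒳 → ℝ => ∑ x, P x * ℓ x ^ 2) :=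
    continuous_finset_sum _ fun x _ => continuous_const.mul ((continuous_apply x).pow 2)
  have hcont : ContinuousOn cost K := by
    apply ContinuousOn.add hmc.continuousOn
    apply ContinuousOn.div hsc.continuousOn (continuous_const.mul hmc).continuousOn
    intro ℓ hℓ
    have := m_pos hcard hP (hKfeas ℓ hℓ).1 (hKfeas ℓ hℓ).2
    exact mul_ne_zero two_ne_zero this.ne'
  obtain ⟨ℓs, hℓsK, hmin⟩ := hKcpt.exists_isMinOn hKne hcont
  refine ⟨ℓs, (hKfeas ℓs hℓsK).1, (hKfeas ℓs hℓsK).2, ?_⟩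
  intro ℓ' h0' hk'
  by_cases hbd : ∀ x, ℓ' x ≤ R
  · exact hmin ⟨⟨fun x => h0' x, fun x => hbd x⟩, hk'⟩
  · push_neg at hbd
    obtain ⟨x, hx⟩ := hbd
    have h1 : cost ℓs ≤ cost ℓ₀ := hmin ⟨⟨fun x => hℓ₀0 x, fun x => hRN⟩, hℓ₀k⟩
    have hm' : 0 < ∑ y, P y * ℓ' y := m_pos hcard hP h0' hk'
    have hs' : 0 ≤ ∑ y, P y * ℓ' y ^ 2 :=
      Finset.sum_nonneg fun y _ => mul_nonneg (hP y).le (sq_nonneg _)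
    have h2 : P x * ℓ' x ≤ ∑ y, P y * ℓ' y :=
      Finset.single_le_sum (f := fun y => P y * ℓ' y)
        (fun y _ => mul_nonneg (hP y).le (h0' y)) (Finset.mem_univ x)
    have h3 : pm * R < P x * ℓ' x := by
      have hpmP : pm ≤ P x := hx₀ x (Finset.mem_univ x)
      have hR0 : 0 < R := by rw [hR]; positivity
      nlinarith [hP x]
    have hdiv : (0:ℝ) ≤ (∑ y, P y * ℓ' y ^ 2) / (2 * ∑ y, P y * ℓ' y) := by positivity
    have h4 : pm * R < cost ℓ' := by
      rw [hcost]
      calc pm * R < P x * ℓ' x := h3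
        _ ≤ ∑ y, P y * ℓ' y := h2
        _ ≤ (∑ y, P y * ℓ' y) + (∑ y, P y * ℓ' y ^ 2) / (2 * ∑ y, P y * ℓ' y) := by linarith
    exact h1.trans (hpmR.le.trans h4.le)


-- derivative of t ↦ 2^(-t)
lemma hasStrictDerivAt_two_rpow_neg (t : ℝ) :
    HasStrictDerivAt (fun u : ℝ => (2:ℝ) ^ (-u)) (-(Real.log 2) * (2:ℝ) ^ (-t)) t := by
  have h := (Real.hasStrictDerivAt_const_rpow (two_pos) (-t)).comp t
    ((hasStrictDerivAt_id t).neg)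
  rw [show -(Real.log 2) * (2:ℝ) ^ (-t) = 2 ^ (-t) * Real.log 2 * -1 by ring]
  exact h

lemma proj_hasStrictFDerivAt (x : 𝒳) (ℓ : 𝒳 → ℝ) :
    HasStrictFDerivAt (fun ℓ' : 𝒳 → ℝ => ℓ' x)
      (ContinuousLinearMap.proj (R := ℝ) (φ := fun _ : 𝒳 => ℝ) x) ℓ :=
  ((ContinuousLinearMap.proj (R := ℝ) (φ := fun _ : 𝒳 => ℝ) x).hasStrictFDerivAt :
    HasStrictFDerivAt _ _ ℓ)

-- evaluation of sums of scaled projections at a single basis vector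
lemma eval_sum_proj [DecidableEq 𝒳] (c : 𝒳 → ℝ) (y : 𝒳) :
    (∑ x, c x • ContinuousLinearMap.proj (R := ℝ) (φ := fun _ : 𝒳 => ℝ) x)
      (Pi.single y 1) = c y := by
  simp [ContinuousLinearMap.sum_apply, Pi.single_apply, mul_ite, Finset.sum_ite_eq']

lemma kraft_hasStrictFDerivAt (ℓ : 𝒳 → ℝ) :
    HasStrictFDerivAt (fun ℓ' : 𝒳 → ℝ => ∑ x, (2:ℝ) ^ (-ℓ' x))
      (∑ x, (-(Real.log 2) * (2:ℝ) ^ (-ℓ x)) •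
        ContinuousLinearMap.proj (R := ℝ) (φ := fun _ : 𝒳 => ℝ) x) ℓ := by
  apply HasStrictFDerivAt.fun_sum
  intro x _
  have := (hasStrictDerivAt_two_rpow_neg (ℓ x)).comp_hasStrictFDerivAt ℓ
    (proj_hasStrictFDerivAt x ℓ)
  exact this

lemma m_hasStrictFDerivAt (P ℓ : 𝒳 → ℝ) :
    HasStrictFDerivAt (fun ℓ' : 𝒳 → ℝ => ∑ x, P x * ℓ' x)
      (∑ x, P x • ContinuousLinearMap.proj (R := ℝ) (φ := fun _ : 𝒳 => ℝ) x) ℓ := by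
  apply HasStrictFDerivAt.fun_sum
  intro x _
  exact (proj_hasStrictFDerivAt x ℓ).const_mul (P x)

lemma s_hasStrictFDerivAt (P ℓ : 𝒳 → ℝ) :
    HasStrictFDerivAt (fun ℓ' : 𝒳 → ℝ => ∑ x, P x * ℓ' x ^ 2)
      (∑ x, (P x * (2 * ℓ x)) •
        ContinuousLinearMap.proj (R := ℝ) (φ := fun _ : 𝒳 => ℝ) x) ℓ := by
  apply HasStrictFDerivAt.fun_sum
  intro x _
  have h : HasStrictDerivAt (fun t : ℝ => P x * t ^ 2) (P x * (2 * ℓ x)) (ℓ x) := by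
    have := (hasStrictDerivAt_pow 2 (ℓ x)).const_mul (P x)
    exact this.congr_deriv (by ring)
  have := h.comp_hasStrictFDerivAt ℓ (proj_hasStrictFDerivAt x ℓ)
  exact this

set_option maxHeartbeats 1000000 in
lemma min_is_dual [DecidableEq 𝒳] (hcard : 2 ≤ Fintype.card 𝒳) (P : 𝒳 → ℝ)
    (hP : ∀ x, 0 < P x) (hPsum : ∑ x, P x = 1) {ℓ : 𝒳 → ℝ}
    (h0 : ∀ x, 0 ≤ ℓ x) (hk : ∑ x, (2:ℝ) ^ (-ℓ x) ≤ 1)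
    (hmin : ∀ ℓ' : 𝒳 → ℝ, (∀ x, 0 ≤ ℓ' x) → (∑ x, (2:ℝ) ^ (-ℓ' x) ≤ 1) →
      (∑ x, P x * ℓ x) + (∑ x, P x * ℓ x ^ 2) / (2 * ∑ x, P x * ℓ x) ≤
      (∑ x, P x * ℓ' x) + (∑ x, P x * ℓ' x ^ 2) / (2 * ∑ x, P x * ℓ' x)) :
    ∃ z : ℝ, ∃ Q : 𝒳 → ℝ, 0 ≤ z ∧ (∀ x, 0 ≤ Q x) ∧ (∑ x, Q x = 1) ∧
      (∀ x, 0 ≤ (1 - z ^ 2 / 2) * P x + z * Real.sqrt (Q x * P x)) ∧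
      (∑ x, P x * ℓ x) + (∑ x, P x * ℓ x ^ 2) / (2 * ∑ x, P x * ℓ x) =
        ∑ x, ((1 - z ^ 2 / 2) * P x + z * Real.sqrt (Q x * P x)) *
          Real.logb 2 ((∑ x', ((1 - z ^ 2 / 2) * P x' + z * Real.sqrt (Q x' * P x'))) /
            ((1 - z ^ 2 / 2) * P x + z * Real.sqrt (Q x * P x))) := by
  have hpos : ∀ x, 0 < ℓ x := ell_pos hcard h0 hk
  have hNE : Nonempty 𝒳 := Fintype.card_pos_iff.mp (by omega)
  set m : ℝ := ∑ x, P x * ℓ x with hmdef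
  set s : ℝ := ∑ x, P x * ℓ x ^ 2 with hsdef
  have hm : 0 < m :=
    Finset.sum_pos (fun x _ => mul_pos (hP x) (hpos x)) Finset.univ_nonempty
  have hs : 0 < s :=
    Finset.sum_pos (fun x _ => mul_pos (hP x) (pow_pos (hpos x) 2)) Finset.univ_nonempty
  set gf : 𝒳 → ℝ := fun x => P x + P x * ℓ x / m - s * P x / (2 * m ^ 2) with hgfdef
  clear_value gf
  -- key sum
  have hglsum : ∑ x, gf x * ℓ x = m + s / (2 * m) := by
    have h1 : ∀ x ∈ Finset.univ, gf x * ℓ x =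
        P x * ℓ x + (P x * ℓ x ^ 2) / m - (s / (2 * m ^ 2)) * (P x * ℓ x) := by
      intro x _; rw [hgfdef]; field_simp
    rw [Finset.sum_congr rfl h1, Finset.sum_sub_distrib, Finset.sum_add_distrib,
      ← Finset.sum_div, ← Finset.mul_sum, ← hmdef, ← hsdef]
    field_simp
    ring
  have hcost_pos : 0 < m + s / (2 * m) := by positivity
  -- derivative of the cost
  set Dm := ∑ x, P x • ContinuousLinearMap.proj (R := ℝ) (φ := fun _ : 𝒳 => ℝ) x with hDm
  set Ds := ∑ x, (P x * (2 * ℓ x)) •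
    ContinuousLinearMap.proj (R := ℝ) (φ := fun _ : 𝒳 => ℝ) x with hDs
  set Dc := ∑ x, gf x • ContinuousLinearMap.proj (R := ℝ) (φ := fun _ : 𝒳 => ℝ) x with hDc
  have hinv : HasStrictDerivAt (fun t : ℝ => (2 * t)⁻¹) (-2 / (2 * m) ^ 2) m := by
    have h2m : (2:ℝ) * m ≠ 0 := by positivity
    have h := (hasStrictDerivAt_inv (x := 2 * m) h2m).comp m
      ((hasStrictDerivAt_id m).const_mul (2:ℝ))
    rw [show (-2 / (2 * m) ^ 2 : ℝ) = -((2 * m) ^ 2)⁻¹ * (2 * 1) by ring]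
    exact h
  have hinvD : HasStrictFDerivAt (fun ℓ' : 𝒳 → ℝ => (2 * ∑ x, P x * ℓ' x)⁻¹)
      ((-2 / (2 * m) ^ 2) • Dm) ℓ :=
    by have := hinv.comp_hasStrictFDerivAt ℓ (m_hasStrictFDerivAt P ℓ); exact this
  have hcostD : HasStrictFDerivAt
      (fun ℓ' : 𝒳 → ℝ => (∑ x, P x * ℓ' x) + (∑ x, P x * ℓ' x ^ 2) / (2 * ∑ x, P x * ℓ' x))
      Dc ℓ := by
    have hdiv : (fun ℓ' : 𝒳 → ℝ =>
        (∑ x, P x * ℓ' x) + (∑ x, P x * ℓ' x ^ 2) / (2 * ∑ x, P x * ℓ' x)) =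
        fun ℓ' => (∑ x, P x * ℓ' x) + (∑ x, P x * ℓ' x ^ 2) * (2 * ∑ x, P x * ℓ' x)⁻¹ := by
      funext ℓ'; rw [div_eq_mul_inv]
    rw [hdiv]
    have h := (m_hasStrictFDerivAt P ℓ).add ((s_hasStrictFDerivAt P ℓ).mul hinvD)
    refine h.congr_fderiv (Eq.symm ?_)
    apply ContinuousLinearMap.ext
    intro v
    simp only [hDc, hDm, hDs, ContinuousLinearMap.add_apply, ContinuousLinearMap.smul_apply,
      ContinuousLinearMap.sum_apply, ContinuousLinearMap.coe_smul', Pi.smul_apply,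
      ContinuousLinearMap.proj_apply, smul_eq_mul, ← hmdef, ← hsdef]
    simp only [Finset.mul_sum]
    rw [← Finset.sum_add_distrib, ← Finset.sum_add_distrib]
    apply Finset.sum_congr rfl
    intro x _
    rw [hgfdef]
    field_simp
    ring
  -- open set of strictly positive lengths
  have hU1 : IsOpen {ℓ' : 𝒳 → ℝ | ∀ x, 0 < ℓ' x} := by
    have : {ℓ' : 𝒳 → ℝ | ∀ x, 0 < ℓ' x} = ⋂ x, {ℓ' : 𝒳 → ℝ | 0 < ℓ' x} := by
      ext ℓ'; simp [Set.mem_iInter]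
    rw [this]
    exact isOpen_iInter_of_finite fun x => isOpen_lt continuous_const (continuous_apply x)
  -- Kraft's inequality is tight at the minimizer
  have hk1 : ∑ x, (2:ℝ) ^ (-ℓ x) = 1 := by
    by_contra hne
    have hklt : ∑ x, (2:ℝ) ^ (-ℓ x) < 1 := lt_of_le_of_ne hk hne
    have hUopen : IsOpen ({ℓ' : 𝒳 → ℝ | ∀ x, 0 < ℓ' x} ∩
        {ℓ' : 𝒳 → ℝ | ∑ x, (2:ℝ) ^ (-ℓ' x) < 1}) :=
      hU1.inter (isOpen_lt kraft_continuous continuous_const)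
    have hlocmin : IsLocalMin
        (fun ℓ' : 𝒳 → ℝ => (∑ x, P x * ℓ' x) + (∑ x, P x * ℓ' x ^ 2) / (2 * ∑ x, P x * ℓ' x))
        ℓ := by
      apply Filter.eventually_of_mem (hUopen.mem_nhds ⟨hpos, hklt⟩)
      rintro ℓ' ⟨h1, h2⟩
      exact hmin ℓ' (fun x => (h1 x).le) h2.le
    have hzero : Dc = 0 := hlocmin.hasFDerivAt_eq_zero hcostD.hasFDerivAt
    have hgf0 : ∀ y, gf y = 0 := by
      intro y
      have h := ContinuousLinearMap.ext_iff.mp hzero (Pi.single y 1)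
      rw [hDc, eval_sum_proj] at h
      simpa using h
    have : ∑ x, gf x * ℓ x = 0 :=
      Finset.sum_eq_zero fun y _ => by rw [hgf0 y]; ring
    rw [hglsum] at this
    linarith
  -- Lagrange multipliers on the level set of the Kraft sum
  have hextr : IsLocalExtrOn
      (fun ℓ' : 𝒳 → ℝ => (∑ x, P x * ℓ' x) + (∑ x, P x * ℓ' x ^ 2) / (2 * ∑ x, P x * ℓ' x))
      {ℓ' : 𝒳 → ℝ | (∑ x, (2:ℝ) ^ (-ℓ' x)) = ∑ x, (2:ℝ) ^ (-ℓ x)} ℓ := by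
    left
    show ∀ᶠ ℓ' in nhdsWithin ℓ _, _ ≤ _
    filter_upwards [mem_nhdsWithin_of_mem_nhds (hU1.mem_nhds hpos), self_mem_nhdsWithin]
      with ℓ' h1 h2
    exact hmin ℓ' (fun x => (h1 x).le) (le_of_eq (h2.trans hk1))
  obtain ⟨a, b, hab, hsum0⟩ :=
    hextr.exists_multipliers_of_hasStrictFDerivAt_1d (kraft_hasStrictFDerivAt ℓ) hcostD
  have heq : ∀ y, a * (-(Real.log 2) * (2:ℝ) ^ (-ℓ y)) + b * gf y = 0 := by
    intro y
    have h := ContinuousLinearMap.ext_iff.mp hsum0 (Pi.single y 1)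
    rw [ContinuousLinearMap.add_apply, ContinuousLinearMap.smul_apply,
      ContinuousLinearMap.smul_apply, hDc, eval_sum_proj, eval_sum_proj] at h
    simpa using h
  have hb : b ≠ 0 := by
    intro hb0
    have y := Classical.arbitrary 𝒳
    have h := heq y
    rw [hb0, zero_mul, add_zero] at h
    have hL : -Real.log 2 * (2:ℝ) ^ (-ℓ y) ≠ 0 :=
      mul_ne_zero (neg_ne_zero.mpr (Real.log_pos (by norm_num : (1:ℝ) < 2)).ne')
        (two_rpow_pos (-ℓ y)).ne'
    have ha : a = 0 := (mul_eq_zero.mp h).resolve_right hL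
    exact hab (by simp [ha, hb0, Prod.ext_iff])
  set ν : ℝ := a * Real.log 2 / b with hνdef
  clear_value ν
  have hgν : ∀ y, gf y = ν * (2:ℝ) ^ (-ℓ y) := by
    intro y
    have h := heq y
    have h2 : b * gf y = a * Real.log 2 * (2:ℝ) ^ (-ℓ y) := by linear_combination h
    rw [hνdef, div_mul_eq_mul_div, eq_div_iff hb]
    linear_combination h2
  have hA : 0 < ∑ x, (2:ℝ) ^ (-ℓ x) * ℓ x :=
    Finset.sum_pos (fun x _ => mul_pos (two_rpow_pos _) (hpos x)) Finset.univ_nonempty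
  have hB : m + s / (2 * m) = ν * ∑ x, (2:ℝ) ^ (-ℓ x) * ℓ x := by
    rw [← hglsum, Finset.mul_sum]
    exact Finset.sum_congr rfl fun x _ => by rw [hgν x]; ring
  have hν : 0 < ν := by
    by_contra hν'
    push_neg at hν'
    nlinarith
  have hgf_nonneg : ∀ x, 0 ≤ gf x := fun x => by
    rw [hgν x]; exact (mul_pos hν (two_rpow_pos _)).le
  -- the dual witness
  have hsqrts : (0:ℝ) < Real.sqrt s := Real.sqrt_pos.mpr hs
  have hgz : ∀ x, (1 - (Real.sqrt s / m) ^ 2 / 2) * P x +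
      (Real.sqrt s / m) * Real.sqrt ((P x * ℓ x ^ 2 / s) * P x) = gf x := by
    intro x
    have h1 : (P x * ℓ x ^ 2 / s) * P x = (P x * ℓ x / Real.sqrt s) ^ 2 := by
      rw [div_pow, Real.sq_sqrt hs.le]
      field_simp
    rw [h1, Real.sqrt_sq
      (div_nonneg (mul_nonneg (hP x).le (hpos x).le) (Real.sqrt_nonneg _))]
    rw [div_pow, Real.sq_sqrt hs.le, hgfdef]
    field_simp
    ring
  refine ⟨Real.sqrt s / m, fun x => P x * ℓ x ^ 2 / s,
    div_nonneg (Real.sqrt_nonneg _) hm.le,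
    fun x => div_nonneg (mul_nonneg (hP x).le (sq_nonneg _)) hs.le, ?_, ?_, ?_⟩
  · rw [← Finset.sum_div, ← hsdef, div_self hs.ne']
  · intro x
    rw [hgz x]
    exact hgf_nonneg x
  · have hsumE : (∑ x', ((1 - (Real.sqrt s / m) ^ 2 / 2) * P x' +
        (Real.sqrt s / m) * Real.sqrt ((P x' * ℓ x' ^ 2 / s) * P x'))) = ν := by
      rw [Finset.sum_congr rfl fun x _ => hgz x,
        Finset.sum_congr rfl fun x (_ : x ∈ Finset.univ) => hgν x,
        ← Finset.mul_sum, hk1, mul_one]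
    rw [← hglsum]
    apply Finset.sum_congr rfl
    intro x _
    rw [hgz x, hsumE, hgν x]
    have h5 : ν / (ν * (2:ℝ) ^ (-ℓ x)) = (2:ℝ) ^ (ℓ x) := by
      rw [Real.rpow_neg (by norm_num : (0:ℝ) ≤ 2), div_mul_eq_div_div,
        div_self hν.ne', one_div, inv_inv]
    rw [h5, Real.logb_rpow two_pos (by norm_num : (2:ℝ) ≠ 1)]

end Stmt7Aux

open Stmt7Aux in
/-- Minmax–maxmin characterization of the minimum average age (Theorem 4 of the paper):
the infimum over real-valued length functions `ℓ ≥ 0` satisfying Kraft's inequality of the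
average-age cost `E[L] + E[L²]/(2E[L])` equals the supremum, over `z ≥ 0` and pmfs `Q` on
`𝒳` with `g_{z,Q,P}(x) = (1 − z²/2)P(x) + z√(Q(x)P(x)) ≥ 0` for all `x`, of
`Σ_x g_{z,Q,P}(x)·log₂(Σ_{x'} g_{z,Q,P}(x') / g_{z,Q,P}(x))`. -/
theorem stmt_7 {𝒳 : Type*} [Fintype 𝒳] (hcard : 2 ≤ Fintype.card 𝒳)
    (P : 𝒳 → ℝ) (hP : ∀ x, 0 < P x) (hPsum : ∑ x, P x = 1) :
    sInf {c : ℝ | ∃ ℓ : 𝒳 → ℝ, (∀ x, 0 ≤ ℓ x) ∧ (∑ x, (2 : ℝ) ^ (-ℓ x) ≤ 1) ∧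
        c = (∑ x, P x * ℓ x) + (∑ x, P x * ℓ x ^ 2) / (2 * ∑ x, P x * ℓ x)} =
    sSup {c : ℝ | ∃ z : ℝ, ∃ Q : 𝒳 → ℝ, 0 ≤ z ∧ (∀ x, 0 ≤ Q x) ∧ (∑ x, Q x = 1) ∧
        (∀ x, 0 ≤ (1 - z ^ 2 / 2) * P x + z * Real.sqrt (Q x * P x)) ∧
        c = ∑ x, ((1 - z ^ 2 / 2) * P x + z * Real.sqrt (Q x * P x)) *
              Real.logb 2 ((∑ x', ((1 - z ^ 2 / 2) * P x' + z * Real.sqrt (Q x' * P x'))) /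
                ((1 - z ^ 2 / 2) * P x + z * Real.sqrt (Q x * P x)))} := by
  classical
  obtain ⟨ℓs, h0s, hks, hmins⟩ := exists_min hcard P hP hPsum
  set cs : ℝ := (∑ x, P x * ℓs x) + (∑ x, P x * ℓs x ^ 2) / (2 * ∑ x, P x * ℓs x) with hcs
  have hmem1 : cs ∈ {c : ℝ | ∃ ℓ : 𝒳 → ℝ, (∀ x, 0 ≤ ℓ x) ∧ (∑ x, (2 : ℝ) ^ (-ℓ x) ≤ 1) ∧
      c = (∑ x, P x * ℓ x) + (∑ x, P x * ℓ x ^ 2) / (2 * ∑ x, P x * ℓ x)} :=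
    ⟨ℓs, h0s, hks, rfl⟩
  have hlb : ∀ c ∈ {c : ℝ | ∃ ℓ : 𝒳 → ℝ, (∀ x, 0 ≤ ℓ x) ∧ (∑ x, (2 : ℝ) ^ (-ℓ x) ≤ 1) ∧
      c = (∑ x, P x * ℓ x) + (∑ x, P x * ℓ x ^ 2) / (2 * ∑ x, P x * ℓ x)}, cs ≤ c := by
    rintro c ⟨ℓ', h0', hk', rfl⟩
    exact hmins ℓ' h0' hk'
  have hInf : sInf {c : ℝ | ∃ ℓ : 𝒳 → ℝ, (∀ x, 0 ≤ ℓ x) ∧ (∑ x, (2 : ℝ) ^ (-ℓ x) ≤ 1) ∧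
      c = (∑ x, P x * ℓ x) + (∑ x, P x * ℓ x ^ 2) / (2 * ∑ x, P x * ℓ x)} = cs :=
    le_antisymm (csInf_le ⟨cs, hlb⟩ hmem1) (le_csInf ⟨cs, hmem1⟩ hlb)
  obtain ⟨z, Q, hz, hQ0, hQs, hgnn, hval⟩ := min_is_dual hcard P hP hPsum h0s hks hmins
  have hmem2 : cs ∈ {c : ℝ | ∃ z : ℝ, ∃ Q : 𝒳 → ℝ, 0 ≤ z ∧ (∀ x, 0 ≤ Q x) ∧ (∑ x, Q x = 1) ∧
      (∀ x, 0 ≤ (1 - z ^ 2 / 2) * P x + z * Real.sqrt (Q x * P x)) ∧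
      c = ∑ x, ((1 - z ^ 2 / 2) * P x + z * Real.sqrt (Q x * P x)) *
            Real.logb 2 ((∑ x', ((1 - z ^ 2 / 2) * P x' + z * Real.sqrt (Q x' * P x'))) /
              ((1 - z ^ 2 / 2) * P x + z * Real.sqrt (Q x * P x)))} :=
    ⟨z, Q, hz, hQ0, hQs, hgnn, hval⟩
  have hub : ∀ d ∈ {c : ℝ | ∃ z : ℝ, ∃ Q : 𝒳 → ℝ, 0 ≤ z ∧ (∀ x, 0 ≤ Q x) ∧ (∑ x, Q x = 1) ∧
      (∀ x, 0 ≤ (1 - z ^ 2 / 2) * P x + z * Real.sqrt (Q x * P x)) ∧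
      c = ∑ x, ((1 - z ^ 2 / 2) * P x + z * Real.sqrt (Q x * P x)) *
            Real.logb 2 ((∑ x', ((1 - z ^ 2 / 2) * P x' + z * Real.sqrt (Q x' * P x'))) /
              ((1 - z ^ 2 / 2) * P x + z * Real.sqrt (Q x * P x)))}, d ≤ cs := by
    rintro d ⟨z', Q', hz', hQ0', hQs', hgnn', rfl⟩
    exact weak_duality hcard P hP hPsum h0s hks (m_pos hcard hP h0s hks) hz' hQ0' hQs' hgnn'
  have hSup : sSup {c : ℝ | ∃ z : ℝ, ∃ Q : 𝒳 → ℝ, 0 ≤ z ∧ (∀ x, 0 ≤ Q x) ∧ (∑ x, Q x = 1) ∧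
      (∀ x, 0 ≤ (1 - z ^ 2 / 2) * P x + z * Real.sqrt (Q x * P x)) ∧
      c = ∑ x, ((1 - z ^ 2 / 2) * P x + z * Real.sqrt (Q x * P x)) *
            Real.logb 2 ((∑ x', ((1 - z ^ 2 / 2) * P x' + z * Real.sqrt (Q x' * P x'))) /
              ((1 - z ^ 2 / 2) * P x + z * Real.sqrt (Q x * P x)))} = cs :=
    le_antisymm (csSup_le ⟨cs, hmem2⟩ hub) (le_csSup ⟨cs, hub⟩ hmem2)
  rw [hInf, hSup]
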